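/- For every integer k ≥ 3 with k ≡ 0 (mod 3), there exist infinitely many graphs G having no {P2,P_{2k+1}}-factor such that for all X ⊆ V(G), the sum over 0 ≤ i ≤ k−1 of c_{2i+1}(G−X) is at most ((4k+6)/(8k+3))·|X| + (2k+3)/(8k+3). -/

import Mathlib

open SimpleGraph

/-- `cCount H i` is the number of connected components of `H` with exactly `i` vertices. -/
noncomputable def cCount {V : Type*} (H : SimpleGraph V) (i : ℕ) : ℕ :=
  Nat.card {c : H.ConnectedComponent // Nat.card c.supp = i}

/-- The component `c` of `F` is (induces) a path of order `n`. -/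
def IsPathComp {V : Type*} (F : SimpleGraph V) (n : ℕ) (c : F.ConnectedComponent) : Prop :=
  Nonempty ((SimpleGraph.induce c.supp F) ≃g SimpleGraph.pathGraph n)

/-- `G` has a spanning subgraph each of whose components is a path of order in `ns`. -/
def HasPathFamilyFactor {V : Type*} (G : SimpleGraph V) (ns : Set ℕ) : Prop :=
  ∃ F ≤ G, ∀ c : F.ConnectedComponent, ∃ n ∈ ns, IsPathComp F n c

/-- `F` is a path-factor of `G`: a spanning subgraph each of whose components is a
path of order at least `2`. -/
def IsPathFactor {V : Type*} (G F : SimpleGraph V) : Prop :=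
  F ≤ G ∧ ∀ c : F.ConnectedComponent, ∃ n, 2 ≤ n ∧ IsPathComp F n c

/-- The neighbourhood `N_G(X)`: vertices outside `X` adjacent to some vertex of `X`. -/
def nbhd {V : Type*} (G : SimpleGraph V) (X : Set V) : Set V :=
  {v | v ∉ X ∧ ∃ u ∈ X, G.Adj u v}

namespace S18

def isC (j a : ℕ) : Prop := a < 2*j-1
def isB (j a : ℕ) : Prop := 2*j-1 ≤ a ∧ a < 6*j+1
def isF (j a : ℕ) : Prop := 6*j+1 ≤ a
def bI (j a : ℕ) : ℕ := (a - (2*j-1))/2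

def Rel (j a b : ℕ) : Prop :=
  (isF j a ∧ isF j b) ∨ (isC j a ∧ isB j b) ∨ (isB j a ∧ isC j b) ∨
  (isB j a ∧ isB j b ∧ bI j a = bI j b)

lemma rel_symm {j a b : ℕ} (h : Rel j a b) : Rel j b a := by
  unfold Rel at *; tauto

def gg (j fs : ℕ) : SimpleGraph (Fin (6*j+1+fs)) where
  Adj u v := u ≠ v ∧ Rel j u.val v.val
  symm := ⟨fun _ _ h => ⟨Ne.symm h.1, rel_symm h.2⟩⟩
  loopless := ⟨fun _ h => h.1 rfl⟩

lemma gg_adj {j fs : ℕ} {u v : Fin (6*j+1+fs)} :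
    (gg j fs).Adj u v ↔ u ≠ v ∧ Rel j u.val v.val := Iff.rfl

lemma no_long_path (j fs : ℕ) (hj : 1 ≤ j) (v : ℕ → Fin (6*j+1+fs))
    (hinj : ∀ i i', i < 6*j+1 → i' < 6*j+1 → v i = v i' → i = i')
    (hcore : ∀ i, i < 6*j+1 → ¬ isF j (v i).val)
    (hadj : ∀ i, i+1 < 6*j+1 → (gg j fs).Adj (v i) (v (i+1))) : False := by
  classical
  set φd : ℕ → ℕ := fun i => if (v i).val < 2*j-1 then (v i).val
    else if (v (i+1)).val < 2*j-1 then (v (i+1)).val else (2*j-1) + bI j (v i).val with hφd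
  -- every value lands in range (4j)
  have himg : ∀ i ∈ Finset.range (6*j), φd i ∈ Finset.range (4*j) := by
    intro i hi
    rw [Finset.mem_range] at hi ⊢
    have hiF : ¬ isF j (v i).val := hcore i (by omega)
    unfold isF at hiF
    simp only [hφd]
    split
    · omega
    · split
      · omega
      · have : bI j (v i).val ≤ 2*j := by unfold bI; omega
        omega
  have hcount := Finset.card_eq_sum_card_fiberwise himg
  rw [Finset.card_range] at hcount
  -- blob structure from adjacency when both endpoints of an edge are non-central
  have hblob : ∀ i, i + 1 < 6*j+1 → ¬ ((v i).val < 2*j-1) → ¬ ((v (i+1)).val < 2*j-1) →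
      ((v i).val = 2*j-1+2*(bI j (v i).val) ∧ (v (i+1)).val = 2*j+2*(bI j (v i).val)) ∨
      ((v (i+1)).val = 2*j-1+2*(bI j (v i).val) ∧ (v i).val = 2*j+2*(bI j (v i).val)) := by
    intro i hi h1 h2
    have hF1 : ¬ isF j (v i).val := hcore i (by omega)
    have hF2 : ¬ isF j (v (i+1)).val := hcore (i+1) hi
    have had := hadj i hi
    rw [gg_adj] at had
    have hne : (v i).val ≠ (v (i+1)).val := fun h => had.1 (Fin.val_injective h)
    rcases had.2 with ⟨ha, hb⟩|⟨ha, hb⟩|⟨ha, hb⟩|⟨ha, hb, hc⟩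
    · exact absurd ha hF1
    · unfold isC at ha; omega
    · unfold isC at hb; omega
    · unfold isB at ha hb; unfold bI at hc ⊢; omega
  -- fiber bounds
  have hfib : ∀ b ∈ Finset.range (4*j),
      ((Finset.range (6*j)).filter (fun i => φd i = b)).card ≤ if b < 2*j-1 then 2 else 1 := by
    intro b _
    by_cases hb : b < 2*j-1
    · rw [if_pos hb]
      have : ((Finset.range (6*j)).filter (fun i => φd i = b)).card ≤ (Finset.univ : Finset Bool).card := by
        apply Finset.card_le_card_of_injOn (fun i => decide ((v i).val = b))
        · intro a _; exact Finset.mem_univ _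
        · intro i hi i' hi' heq
          simp only [Finset.coe_filter, Set.mem_setOf_eq, Finset.mem_range] at hi hi'
          obtain ⟨hi1, hi2⟩ := hi
          obtain ⟨hi1', hi2'⟩ := hi'
          -- from φd i = b < 2j-1 : (v i).val = b ∨ (v (i+1)).val = b
          have key : ∀ n, n < 6*j → φd n = b → ((v n).val = b ∨ ((v n).val ≥ 2*j-1 ∧ (v (n+1)).val = b)) := by
            intro n _ hn
            simp only [hφd] at hn
            split at hn
            · left; exact hn
            · split at hn
              · right; omega
              · exfalso; omega
          have k1 := key i hi1 hi2
          have k2 := key i' hi1' hi2'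
          by_cases h1 : (v i).val = b
          · have h2 : (v i').val = b := by
              by_contra h2
              simp [h1, h2] at heq
            exact hinj i i' (by omega) (by omega) (Fin.val_injective (h1.trans h2.symm))
          · have h2 : ¬ (v i').val = b := by
              by_contra h2
              simp [h1, h2] at heq
            have k1' := k1.resolve_left h1
            have k2' := k2.resolve_left h2
            have := hinj (i+1) (i'+1) (by omega) (by omega)
              (Fin.val_injective (k1'.2.trans k2'.2.symm))
            omega
      simpa using this
    · rw [if_neg hb]
      rw [Finset.card_le_one]
      intro i hi i' hi'
      simp only [Finset.mem_filter, Finset.mem_range] at hi hi'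
      obtain ⟨hi1, hi2⟩ := hi
      obtain ⟨hi1', hi2'⟩ := hi'
      have key : ∀ n, n < 6*j → φd n = b →
          (¬ ((v n).val < 2*j-1) ∧ ¬ ((v (n+1)).val < 2*j-1) ∧ 2*j-1 + bI j (v n).val = b) := by
        intro n _ hn
        simp only [hφd] at hn
        split at hn
        · exfalso; omega
        · split at hn
          · exfalso; omega
          · exact ⟨by assumption, by assumption, hn⟩
      have k1 := key i hi1 hi2
      have k2 := key i' hi1' hi2'
      have b1 := hblob i (by omega) k1.1 k1.2.1
      have b2 := hblob i' (by omega) k2.1 k2.2.1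
      have hbi : bI j (v i).val = bI j (v i').val := by omega
      -- compare values
      rcases b1 with ⟨c1, c2⟩|⟨c1, c2⟩ <;> rcases b2 with ⟨d1, d2⟩|⟨d1, d2⟩
      · exact hinj i i' (by omega) (by omega) (Fin.val_injective (by omega))
      · -- v i = v (i'+1), v (i+1) = v i'
        have e1 := hinj i (i'+1) (by omega) (by omega) (Fin.val_injective (by omega))
        have e2 := hinj (i+1) i' (by omega) (by omega) (Fin.val_injective (by omega))
        omega
      · have e1 := hinj (i+1) i' (by omega) (by omega) (Fin.val_injective (by omega))
        have e2 := hinj i (i'+1) (by omega) (by omega) (Fin.val_injective (by omega))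
        omega
      · exact hinj i i' (by omega) (by omega) (Fin.val_injective (by omega))
  -- sum up
  have hle : (6*j : ℕ) ≤ ∑ b ∈ Finset.range (4*j), (if b < 2*j-1 then 2 else 1) := by
    rw [hcount]
    exact Finset.sum_le_sum hfib
  have hsum : ∑ b ∈ Finset.range (4*j), (if b < 2*j-1 then 2 else 1) = 4*j + (2*j-1) := by
    have h1 : ∀ b, (if b < 2*j-1 then (2:ℕ) else 1) = 1 + (if b < 2*j-1 then 1 else 0) := by
      intro b; split <;> rfl
    simp only [h1]
    rw [Finset.sum_add_distrib, Finset.sum_const, Finset.card_range, Finset.sum_boole]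
    have : (Finset.range (4*j)).filter (fun b => b < 2*j-1) = Finset.range (2*j-1) := by
      ext b; simp only [Finset.mem_filter, Finset.mem_range]; omega
    rw [this, Finset.card_range]
    simp
  omega

lemma reach_flag {V : Type*} {G : SimpleGraph V} {P : V → Prop}
    (hP : ∀ u v, G.Adj u v → (P u ↔ P v)) {u v : V} (h : G.Reachable u v) :
    P u ↔ P v := by
  obtain ⟨w⟩ := h
  induction w with
  | nil => exact Iff.rfl
  | cons h p ih => exact (hP _ _ h).trans ih

lemma isolated_reach {V : Type*} {G : SimpleGraph V} {u v : V}
    (hu : ∀ w, ¬ G.Adj u w) (h : G.Reachable u v) : u = v := by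
  obtain ⟨w⟩ := h
  cases w with
  | nil => rfl
  | cons h p => exact absurd h (hu _)

lemma natCard_subtype_set {m : ℕ} {X : Set (Fin m)} (S : Set ↥X) :
    Nat.card S = (Subtype.val '' S : Set (Fin m)).ncard := by
  rw [← Nat.card_coe_set_eq]
  exact Nat.card_congr (Equiv.Set.image _ S Subtype.val_injective)

lemma ncard_val_Ico {m lo hi : ℕ} (h : hi ≤ m) :
    ({v : Fin m | lo ≤ v.val ∧ v.val < hi}).ncard = hi - lo := by
  classical
  have he : {v : Fin m | lo ≤ v.val ∧ v.val < hi} =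
      ↑((Finset.Ico lo hi).attachFin
        (fun x hx => lt_of_lt_of_le (Finset.mem_Ico.mp hx).2 h)) := by
    ext v
    simp [Finset.mem_attachFin, Finset.mem_Ico]
  rw [he, Set.ncard_coe_finset, Finset.card_attachFin, Nat.card_Ico]

theorem no_factor (j fs : ℕ) (hj : 1 ≤ j) :
    ¬ HasPathFamilyFactor (gg j fs) {2, 2*(3*j)+1} := by
  rintro ⟨F, hle, hcomp⟩
  classical
  have hFadj : ∀ u v, F.Adj u v → (isF j u.val ↔ isF j v.val) := by
    intro u v h
    have h2 := (hle h).2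
    rcases h2 with ⟨ha, hb⟩|⟨ha, hb⟩|⟨ha, hb⟩|⟨ha, hb, _⟩
    · unfold isF at *; omega
    · unfold isC at ha; unfold isB at hb; unfold isF; omega
    · unfold isB at ha; unfold isC at hb; unfold isF; omega
    · unfold isB at ha hb; unfold isF; omega
  have hcard : ∀ c : F.ConnectedComponent, (∀ w ∈ c.supp, ¬ isF j w.val) →
      Nat.card c.supp = 2 := by
    intro c hcw
    obtain ⟨n, hn, ⟨φ⟩⟩ := hcomp c
    have hcn : Nat.card c.supp = n := by
      rw [Nat.card_congr φ.toEquiv, Nat.card_eq_fintype_card, Fintype.card_fin]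
    have hn2 : n = 2 ∨ n = 2*(3*j)+1 := by simpa using hn
    rcases hn2 with rfl | rfl
    · exact hcn
    exfalso
    set v : ℕ → Fin (6*j+1+fs) := fun i => if h : i < 2*(3*j)+1 then
      ((φ.symm ⟨i, h⟩ : ↥c.supp) : Fin (6*j+1+fs)) else ⟨0, by omega⟩ with hv
    have hmem : ∀ i, i < 6*j+1 → v i ∈ c.supp := by
      intro i hi
      simp only [hv]
      rw [dif_pos (by omega : i < 2*(3*j)+1)]
      exact (φ.symm ⟨i, by omega⟩).2
    apply no_long_path j fs hj v
    · intro i i' hi hi' heq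
      simp only [hv] at heq
      rw [dif_pos (by omega : i < 2*(3*j)+1), dif_pos (by omega : i' < 2*(3*j)+1)] at heq
      have h3 := φ.symm.injective (Subtype.val_injective heq)
      exact Fin.mk.inj_iff.mp h3
    · intro i hi hF
      exact (hcw _ (hmem i hi)) hF
    · intro i hi
      have hpg : (pathGraph (2*(3*j)+1)).Adj ⟨i, by omega⟩ ⟨i+1, by omega⟩ := by
        rw [pathGraph_adj]; left; rfl
      have hAdj := φ.symm.map_adj_iff.mpr hpg
      have hFAdj : F.Adj ((φ.symm ⟨i, by omega⟩ : ↥c.supp) : Fin (6*j+1+fs))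
          ((φ.symm ⟨i+1, by omega⟩ : ↥c.supp) : Fin (6*j+1+fs)) := hAdj
      have hgg := hle hFAdj
      simp only [hv]
      rw [dif_pos (by omega : i < 2*(3*j)+1), dif_pos (by omega : i+1 < 2*(3*j)+1)]
      exact hgg
  -- parity
  set coreF : Finset (Fin (6*j+1+fs)) := (Finset.range (6*j+1)).attachFin
      (fun x hx => by rw [Finset.mem_range] at hx; omega) with hcoreF
  have hcfc : coreF.card = 6*j+1 := by rw [Finset.card_attachFin, Finset.card_range]
  have hpart := Finset.card_eq_sum_card_fiberwise
    (f := F.connectedComponentMk) (s := coreF) (t := coreF.image F.connectedComponentMk)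
    (fun x hx => Finset.mem_image_of_mem _ hx)
  have hfib2 : ∀ c ∈ coreF.image F.connectedComponentMk,
      (coreF.filter (fun w => F.connectedComponentMk w = c)).card = 2 := by
    intro c hc
    obtain ⟨v₀, hv₀, hmk⟩ := Finset.mem_image.mp hc
    have hv₀core : ¬ isF j v₀.val := by
      have hm : (v₀ : Fin (6*j+1+fs)) ∈ coreF := hv₀
      rw [hcoreF, Finset.mem_attachFin, Finset.mem_range] at hm
      unfold isF; omega
    have hsupp : ∀ w ∈ c.supp, ¬ isF j (w : Fin (6*j+1+fs)).val := by
      intro w hw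
      have hr : F.Reachable w v₀ := by
        apply ConnectedComponent.exact
        rw [(ConnectedComponent.mem_supp_iff c w).mp hw, ← hmk]
      have hflag := reach_flag hFadj hr
      intro hF
      exact hv₀core (hflag.mp hF)
    have h2 := hcard c hsupp
    have hset : ((coreF.filter (fun w => F.connectedComponentMk w = c)) :
        Set (Fin (6*j+1+fs))) = c.supp := by
      ext w
      simp only [Finset.coe_filter, Set.mem_setOf_eq, ConnectedComponent.mem_supp_iff]
      constructor
      · rintro ⟨_, h⟩; exact h
      · intro h
        refine ⟨?_, h⟩
        have hw : ¬ isF j w.val := hsupp w (by rwa [ConnectedComponent.mem_supp_iff])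
        rw [hcoreF, Finset.mem_attachFin, Finset.mem_range]
        unfold isF at hw; omega
    have h4 : (coreF.filter (fun w => F.connectedComponentMk w = c)).card
        = (c.supp).ncard := by rw [← Set.ncard_coe_finset, hset]
    rw [h4, ← Nat.card_coe_set_eq, h2]
  rw [hcfc, Finset.sum_congr rfl hfib2, Finset.sum_const, smul_eq_mul] at hpart
  omega

lemma card_le_one_of_all_eq {α : Type*} [Finite α] (h : ∀ a b : α, a = b) :
    Nat.card α ≤ 1 := by
  have h2 : Function.Injective (fun _ : α => ()) := fun a b _ => h a b
  have := Nat.card_le_card_of_injective _ h2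
  simpa using this

lemma card_le_two_of_bool {α : Type*} (f : α → Bool) (h : ∀ a b : α, f a = f b → a = b) :
    Nat.card α ≤ 2 := by
  have := Nat.card_le_card_of_injective f h
  simpa using this

lemma sum_cCount_le {V : Type*} [Finite V] (H : SimpleGraph V) (K : ℕ) :
    (∑ i ∈ Finset.range K, cCount H (2*i+1)) ≤
      Nat.card {c : H.ConnectedComponent // Odd (Nat.card c.supp) ∧ Nat.card c.supp ≤ 2*K-1} := by
  classical
  letI : Fintype H.ConnectedComponent := Fintype.ofFinite _
  have h1 : ∀ n, cCount H n =
      (Finset.univ.filter (fun c : H.ConnectedComponent => Nat.card c.supp = n)).card := by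
    intro n
    rw [cCount, Nat.card_eq_fintype_card, Fintype.card_subtype]
  calc (∑ i ∈ Finset.range K, cCount H (2*i+1))
      = ∑ i ∈ Finset.range K, (Finset.univ.filter
          (fun c : H.ConnectedComponent => Nat.card c.supp = 2*i+1)).card :=
        Finset.sum_congr rfl (fun i _ => h1 _)
    _ = ((Finset.range K).biUnion (fun i => Finset.univ.filter
          (fun c : H.ConnectedComponent => Nat.card c.supp = 2*i+1))).card := by
        rw [Finset.card_biUnion]
        intro x _ y _ hxy
        rw [Function.onFun, Finset.disjoint_left]
        intro c hc hc'
        rw [Finset.mem_filter] at hc hc'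
        omega
    _ ≤ (Finset.univ.filter (fun c : H.ConnectedComponent =>
          Odd (Nat.card c.supp) ∧ Nat.card c.supp ≤ 2*K-1)).card := by
        apply Finset.card_le_card
        intro c hc
        rw [Finset.mem_biUnion] at hc
        obtain ⟨i, hi, hc2⟩ := hc
        rw [Finset.mem_filter] at hc2 ⊢
        rw [Finset.mem_range] at hi
        refine ⟨Finset.mem_univ _, ?_, ?_⟩
        · rw [hc2.2, Nat.odd_iff]; omega
        · omega
    _ = Nat.card _ := by rw [Nat.card_eq_fintype_card, Fintype.card_subtype]

lemma arithA (j x T dc df ec ef : ℕ) (hT : T ≤ ec + ef) (hdc : 2*ec ≤ dc) (hdf : 3*ef ≤ df)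
    (hx : dc + df = x) :
    (24*j+3) * T ≤ (12*j+6) * x + (6*j+3) := by
  have h1 : (24*j+3) * T ≤ (24*j+3) * (ec+ef) := Nat.mul_le_mul_left _ hT
  have h2 : (12*j+6) * (2*ec + 3*ef) ≤ (12*j+6) * x := Nat.mul_le_mul_left _ (by omega)
  nlinarith [h1, h2]

lemma arithB (j x T q e dB dF : ℕ) (hj : 1 ≤ j) (hT : T ≤ q + e) (he : e ≤ 1)
    (hq : q ≤ 2*j+1) (hqd : q ≤ dB) (hdf : 3*e ≤ dF) (hx : (2*j-1) + dB + dF = x) :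
    (24*j+3) * T ≤ (12*j+6) * x + (6*j+3) := by
  obtain ⟨i, rfl⟩ : ∃ i, j = i + 1 := ⟨j-1, by omega⟩
  have hx' : x = 2*i+1 + dB + dF := by omega
  subst hx'
  have h1 : (24*(i+1)+3) * T ≤ (24*(i+1)+3) * (q+e) := Nat.mul_le_mul_left _ hT
  have h2 : (12*i+9)*q ≤ (12*i+9)*(2*i+3) := Nat.mul_le_mul_left _ (by omega)
  have h3 : (12*i+18)*q ≤ (12*i+18)*dB := Nat.mul_le_mul_left _ hqd
  have h4 : (12*i+18)*(3*e) ≤ (12*i+18)*dF := Nat.mul_le_mul_left _ hdf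
  nlinarith [h1, h2, h3, h4]

lemma arithC (j x T a e dC dF : ℕ) (hj : 1 ≤ j) (hT : T ≤ a + e) (he : e ≤ 1)
    (ha : a + dC = 2*j-1) (hdf : 3*e ≤ dF) (hx : dC + (4*j+2) + dF = x) :
    (24*j+3) * T ≤ (12*j+6) * x + (6*j+3) := by
  obtain ⟨i, rfl⟩ : ∃ i, j = i + 1 := ⟨j-1, by omega⟩
  have ha' : a + dC = 2*i+1 := by omega
  have h1 : (24*(i+1)+3) * T ≤ (24*(i+1)+3) * (a+e) := Nat.mul_le_mul_left _ hT
  have h2 : (24*i+27)*a ≤ (24*i+27)*(2*i+1) := Nat.mul_le_mul_left _ (by omega)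
  have h3 : (12*i+18)*(3*e) ≤ (12*i+18)*dF := Nat.mul_le_mul_left _ hdf
  nlinarith [h1, h2, h3]

theorem ineq (j fs : ℕ) (hj : 1 ≤ j) (hfs : 6*j+2 ≤ fs) (X : Set (Fin (6*j+1+fs))) :
    (24*j+3) * (∑ i ∈ Finset.range (3*j), cCount (SimpleGraph.induce Xᶜ (gg j fs)) (2*i+1))
      ≤ (12*j+6) * X.ncard + (6*j+3) := by
  classical
  set H := SimpleGraph.induce Xᶜ (gg j fs) with hH
  have hsum := sum_cCount_le H (3*j)
  suffices key : (24*j+3) * Nat.card {c : H.ConnectedComponent //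
      Odd (Nat.card c.supp) ∧ Nat.card c.supp ≤ 2*(3*j)-1} ≤ (12*j+6) * X.ncard + (6*j+3) by
    exact le_trans (Nat.mul_le_mul_left _ hsum) key
  -- basic adjacency facts in `H`
  have Hadj' : ∀ u v : ↥Xᶜ, H.Adj u v →
      ((u : Fin (6*j+1+fs)) ≠ ↑v ∧ Rel j u.1.val v.1.val) := fun u v h => h
  have HadjI : ∀ u v : ↥Xᶜ, (u : Fin (6*j+1+fs)) ≠ ↑v → Rel j u.1.val v.1.val → H.Adj u v :=
    fun _ _ h1 h2 => ⟨h1, h2⟩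
  -- the filler flag is constant on components
  have hflag : ∀ (u v : ↥Xᶜ), H.Reachable u v → (isF j u.1.val ↔ isF j v.1.val) := by
    intro u v h
    refine reach_flag (P := fun w : ↥Xᶜ => isF j w.1.val) ?_ h
    intro a b hab
    have h2 := (Hadj' a b hab).2
    rcases h2 with ⟨ha, hb⟩|⟨ha, hb⟩|⟨ha, hb⟩|⟨ha, hb, _⟩
    · unfold isF at *; omega
    · unfold isC at ha; unfold isB at hb; unfold isF; omega
    · unfold isB at ha; unfold isC at hb; unfold isF; omega
    · unfold isB at ha hb; unfold isF; omega
  -- filler vertices are mutually reachable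
  have hFreach : ∀ (u v : ↥Xᶜ), isF j u.1.val → isF j v.1.val → H.Reachable u v := by
    intro u v hu hv
    by_cases he : u = v
    · rw [he]
    · exact (HadjI u v (fun hh => he (Subtype.val_injective hh)) (Or.inl ⟨hu, hv⟩)).reachable
  -- supp of a filler component
  have hFsupp : ∀ (cc : H.ConnectedComponent) (u : ↥Xᶜ), u ∈ cc.supp → isF j u.1.val →
      Subtype.val '' cc.supp = {w : Fin (6*j+1+fs) | isF j w.val} \ X := by
    intro cc u hu huf
    ext w
    constructor
    · rintro ⟨y, hy, rfl⟩
      have hr : H.Reachable y u := ConnectedComponent.exact (by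
        rw [(ConnectedComponent.mem_supp_iff cc y).mp hy,
            (ConnectedComponent.mem_supp_iff cc u).mp hu])
      exact ⟨(hflag y u hr).mpr huf, y.2⟩
    · rintro ⟨hwf, hwX⟩
      refine ⟨⟨w, hwX⟩, ?_, rfl⟩
      rw [ConnectedComponent.mem_supp_iff, ← (ConnectedComponent.mem_supp_iff cc u).mp hu]
      exact ConnectedComponent.sound (hFreach _ _ hwf huf)
  -- region cardinalities
  have hSFncard : ({w : Fin (6*j+1+fs) | isF j w.val}).ncard = fs := by
    have he : {w : Fin (6*j+1+fs) | isF j w.val}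
        = {v : Fin (6*j+1+fs) | 6*j+1 ≤ v.val ∧ v.val < 6*j+1+fs} := by
      ext w; simp only [Set.mem_setOf_eq]; unfold isF
      exact ⟨fun h => ⟨h, w.isLt⟩, fun h => h.1⟩
    rw [he, ncard_val_Ico (m := 6*j+1+fs) (lo := 6*j+1) (hi := 6*j+1+fs) (le_refl _)]
    omega
  have hNFncard : ({w : Fin (6*j+1+fs) | ¬ isF j w.val}).ncard = 6*j+1 := by
    have he : {w : Fin (6*j+1+fs) | ¬ isF j w.val}
        = {v : Fin (6*j+1+fs) | 0 ≤ v.val ∧ v.val < 6*j+1} := by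
      ext w; simp only [Set.mem_setOf_eq]; unfold isF
      exact ⟨fun h => ⟨Nat.zero_le _, by omega⟩, fun h => by omega⟩
    rw [he, ncard_val_Ico (m := 6*j+1+fs) (lo := 0) (hi := 6*j+1) (by omega)]
    omega
  have hCncard : ({w : Fin (6*j+1+fs) | isC j w.val}).ncard = 2*j-1 := by
    have he : {w : Fin (6*j+1+fs) | isC j w.val}
        = {v : Fin (6*j+1+fs) | 0 ≤ v.val ∧ v.val < 2*j-1} := by
      ext w; simp only [Set.mem_setOf_eq]; unfold isC
      exact ⟨fun h => ⟨Nat.zero_le _, h⟩, fun h => h.2⟩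
    rw [he, ncard_val_Ico (m := 6*j+1+fs) (lo := 0) (hi := 2*j-1) (by omega)]
    omega
  have hBncard : ({w : Fin (6*j+1+fs) | isB j w.val}).ncard = 4*j+2 := by
    have he : {w : Fin (6*j+1+fs) | isB j w.val}
        = {v : Fin (6*j+1+fs) | 2*j-1 ≤ v.val ∧ v.val < 6*j+1} := by
      ext w; simp only [Set.mem_setOf_eq]; unfold isB; exact ⟨fun h => h, fun h => h⟩
    rw [he, ncard_val_Ico (m := 6*j+1+fs) (lo := 2*j-1) (hi := 6*j+1) (by omega)]
    omega
  -- splitting counts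
  have hsplit : ∀ T : Set (Fin (6*j+1+fs)), (T \ X).ncard + (T ∩ X).ncard = T.ncard := by
    intro T
    rw [← Set.ncard_union_eq (by
      rw [Set.disjoint_left]; rintro a ⟨-, ha⟩ ⟨-, ha'⟩; exact ha ha') (Set.toFinite _) (Set.toFinite _)]
    congr 1
    ext w
    constructor
    · rintro (⟨h, -⟩|⟨h, -⟩) <;> exact h
    · intro hw
      by_cases hx : w ∈ X
      · exact Or.inr ⟨hw, hx⟩
      · exact Or.inl ⟨hw, hx⟩
  have hXsplit2 : ({w : Fin (6*j+1+fs) | ¬ isF j w.val} ∩ X).ncard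
      + ({w : Fin (6*j+1+fs) | isF j w.val} ∩ X).ncard = X.ncard := by
    rw [← Set.ncard_union_eq (by
      rw [Set.disjoint_left]; rintro a ⟨ha, -⟩ ⟨ha', -⟩; exact ha ha') (Set.toFinite _) (Set.toFinite _)]
    congr 1
    ext w
    constructor
    · rintro (⟨-, h⟩|⟨-, h⟩) <;> exact h
    · intro hw
      by_cases hf : isF j w.val
      · exact Or.inr ⟨hf, hw⟩
      · exact Or.inl ⟨hf, hw⟩
  have hXsplit3 : ({w : Fin (6*j+1+fs) | isC j w.val} ∩ X).ncard
      + ({w : Fin (6*j+1+fs) | isB j w.val} ∩ X).ncard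
      = ({w : Fin (6*j+1+fs) | ¬ isF j w.val} ∩ X).ncard := by
    rw [← Set.ncard_union_eq (by
      rw [Set.disjoint_left]; rintro a ⟨ha, -⟩ ⟨ha', -⟩
      simp only [Set.mem_setOf_eq] at ha ha'
      unfold isC at ha; unfold isB at ha'; omega) (Set.toFinite _) (Set.toFinite _)]
    congr 1
    ext w
    constructor
    · rintro (⟨h, hx⟩|⟨h, hx⟩)
      · refine ⟨?_, hx⟩
        simp only [Set.mem_setOf_eq] at h ⊢
        unfold isC at h; unfold isF; omega
      · refine ⟨?_, hx⟩
        simp only [Set.mem_setOf_eq] at h ⊢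
        unfold isB at h; unfold isF; omega
    · rintro ⟨h, hx⟩
      simp only [Set.mem_setOf_eq] at h
      by_cases hc : isC j w.val
      · exact Or.inl ⟨hc, hx⟩
      · refine Or.inr ⟨?_, hx⟩
        simp only [Set.mem_setOf_eq]
        unfold isC at hc; unfold isF at h; unfold isB; omega
  -- a component always has a representative in its support
  have hrep : ∀ cc : H.ConnectedComponent, ∃ u, u ∈ cc.supp := by
    intro cc
    obtain ⟨u, hu⟩ := cc.exists_rep
    exact ⟨u, (ConnectedComponent.mem_supp_iff cc u).mpr hu⟩
  have hdfbound : (∃ cc : H.ConnectedComponent, (Odd (Nat.card cc.supp) ∧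
        Nat.card cc.supp ≤ 2*(3*j)-1) ∧ ∃ u, u ∈ cc.supp ∧ isF j u.1.val) →
      3 ≤ ({w : Fin (6*j+1+fs) | isF j w.val} ∩ X).ncard := by
    rintro ⟨cc, hSO, u, hu, huf⟩
    have hcard1 : Nat.card cc.supp = ({w : Fin (6*j+1+fs) | isF j w.val} \ X).ncard := by
      rw [natCard_subtype_set, hFsupp cc u hu huf]
    have hsp := hsplit {w : Fin (6*j+1+fs) | isF j w.val}
    rw [hSFncard] at hsp
    omega
  by_cases hC : ∃ u : ↥Xᶜ, isC j u.1.val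
  · by_cases hB : ∃ u : ↥Xᶜ, isB j u.1.val
    · -- CASE A : some centre and some blob vertex are alive
      obtain ⟨c₀, hc₀⟩ := hC
      obtain ⟨b₀, hb₀⟩ := hB
      have hado : H.Adj c₀ b₀ := HadjI _ _ (by
          intro h
          have := congrArg Fin.val h
          unfold isC at hc₀; unfold isB at hb₀; omega)
        (Or.inr (Or.inl ⟨hc₀, hb₀⟩))
      have hreach : ∀ u : ↥Xᶜ, ¬ isF j u.1.val → H.Reachable u b₀ := by
        intro u hu
        by_cases hcu : isC j u.1.val
        · exact (HadjI _ _ (by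
            intro h
            have := congrArg Fin.val h
            unfold isC at hcu; unfold isB at hb₀; omega)
            (Or.inr (Or.inl ⟨hcu, hb₀⟩))).reachable
        · have hbu : isB j u.1.val := by
            unfold isB at *; unfold isC at hcu; unfold isF at hu; omega
          exact ((HadjI u c₀ (by
            intro h
            have := congrArg Fin.val h
            unfold isB at hbu; unfold isC at hc₀; omega)
            (Or.inr (Or.inr (Or.inl ⟨hbu, hc₀⟩)))).reachable).trans hado.reachable
      have huniqNF : ∀ (cc cc' : H.ConnectedComponent) (u u' : ↥Xᶜ), u ∈ cc.supp → u' ∈ cc'.supp →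
          ¬ isF j u.1.val → ¬ isF j u'.1.val → cc = cc' := by
        intro cc cc' u u' hu hu' hfu hfu'
        rw [← (ConnectedComponent.mem_supp_iff cc u).mp hu,
            ← (ConnectedComponent.mem_supp_iff cc' u').mp hu']
        exact ConnectedComponent.sound ((hreach u hfu).trans (hreach u' hfu').symm)
      have hNFsupp : ∀ (cc : H.ConnectedComponent) (u : ↥Xᶜ), u ∈ cc.supp → ¬ isF j u.1.val →
          Subtype.val '' cc.supp = {w : Fin (6*j+1+fs) | ¬ isF j w.val} \ X := by
        intro cc u hu huf
        ext w
        constructor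
        · rintro ⟨y, hy, rfl⟩
          have hr : H.Reachable y u := ConnectedComponent.exact (by
            rw [(ConnectedComponent.mem_supp_iff cc y).mp hy,
                (ConnectedComponent.mem_supp_iff cc u).mp hu])
          refine ⟨fun hf => huf ((hflag y u hr).mp hf), y.2⟩
        · rintro ⟨hwf, hwX⟩
          refine ⟨⟨w, hwX⟩, ?_, rfl⟩
          rw [ConnectedComponent.mem_supp_iff, ← (ConnectedComponent.mem_supp_iff cc u).mp hu]
          exact ConnectedComponent.sound ((hreach ⟨w, hwX⟩ hwf).trans (hreach u huf).symm)
      -- deletions forced by a small odd nonfiller component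
      have hdcbound : (∃ cc : H.ConnectedComponent, (Odd (Nat.card cc.supp) ∧
            Nat.card cc.supp ≤ 2*(3*j)-1) ∧ ∃ u, u ∈ cc.supp ∧ ¬ isF j u.1.val) →
          2 ≤ ({w : Fin (6*j+1+fs) | ¬ isF j w.val} ∩ X).ncard := by
        rintro ⟨cc, hSO, u, hu, hunf⟩
        have hcard1 : Nat.card cc.supp = ({w : Fin (6*j+1+fs) | ¬ isF j w.val} \ X).ncard := by
          rw [natCard_subtype_set, hNFsupp cc u hu hunf]
        have hsp := hsplit {w : Fin (6*j+1+fs) | ¬ isF j w.val}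
        rw [hNFncard] at hsp
        omega
      by_cases hEc : ∃ cc : H.ConnectedComponent, (Odd (Nat.card cc.supp) ∧
          Nat.card cc.supp ≤ 2*(3*j)-1) ∧ ∃ u, u ∈ cc.supp ∧ ¬ isF j u.1.val
      · by_cases hEf : ∃ cc : H.ConnectedComponent, (Odd (Nat.card cc.supp) ∧
            Nat.card cc.supp ≤ 2*(3*j)-1) ∧ ∃ u, u ∈ cc.supp ∧ isF j u.1.val
        · -- both kinds: T ≤ 2
          have hT : Nat.card {c : H.ConnectedComponent //
              Odd (Nat.card c.supp) ∧ Nat.card c.supp ≤ 2*(3*j)-1} ≤ 2 := by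
            apply card_le_two_of_bool (fun c => decide (∃ u, u ∈ c.1.supp ∧ isF j u.1.val))
            intro a b hab
            rw [decide_eq_decide] at hab
            obtain ⟨ua, hua⟩ := hrep a.1
            obtain ⟨ub, hub⟩ := hrep b.1
            apply Subtype.ext
            by_cases hfa : ∃ u, u ∈ a.1.supp ∧ isF j u.1.val
            · obtain ⟨xb, hxb, hxbf⟩ := hab.mp hfa
              obtain ⟨xa, hxa, hxaf⟩ := hfa
              rw [← (ConnectedComponent.mem_supp_iff a.1 xa).mp hxa,
                  ← (ConnectedComponent.mem_supp_iff b.1 xb).mp hxb]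
              exact ConnectedComponent.sound (hFreach xa xb hxaf hxbf)
            · have hfb : ¬ ∃ u, u ∈ b.1.supp ∧ isF j u.1.val := fun h => hfa (hab.mpr h)
              have ha' : ¬ isF j ua.1.val := fun h => hfa ⟨ua, hua, h⟩
              have hb' : ¬ isF j ub.1.val := fun h => hfb ⟨ub, hub, h⟩
              exact huniqNF a.1 b.1 ua ub hua hub ha' hb'
          exact arithA j X.ncard _ _ _ 1 1 hT (by simpa using hdcbound hEc)
            (by simpa using hdfbound hEf) hXsplit2
        · -- only nonfiller kind: T ≤ 1
          have hT : Nat.card {c : H.ConnectedComponent //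
              Odd (Nat.card c.supp) ∧ Nat.card c.supp ≤ 2*(3*j)-1} ≤ 1 := by
            apply card_le_one_of_all_eq
            intro a b
            obtain ⟨ua, hua⟩ := hrep a.1
            obtain ⟨ub, hub⟩ := hrep b.1
            have ha' : ¬ isF j ua.1.val := fun h => hEf ⟨a.1, a.2, ua, hua, h⟩
            have hb' : ¬ isF j ub.1.val := fun h => hEf ⟨b.1, b.2, ub, hub, h⟩
            exact Subtype.ext (huniqNF a.1 b.1 ua ub hua hub ha' hb')
          exact arithA j X.ncard _ _ _ 1 0 (by omega) (by simpa using hdcbound hEc)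
            (by omega) hXsplit2
      · by_cases hEf : ∃ cc : H.ConnectedComponent, (Odd (Nat.card cc.supp) ∧
            Nat.card cc.supp ≤ 2*(3*j)-1) ∧ ∃ u, u ∈ cc.supp ∧ isF j u.1.val
        · have hT : Nat.card {c : H.ConnectedComponent //
              Odd (Nat.card c.supp) ∧ Nat.card c.supp ≤ 2*(3*j)-1} ≤ 1 := by
            apply card_le_one_of_all_eq
            intro a b
            obtain ⟨ua, hua⟩ := hrep a.1
            obtain ⟨ub, hub⟩ := hrep b.1
            have ha' : isF j ua.1.val := by
              by_contra h
              exact hEc ⟨a.1, a.2, ua, hua, h⟩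
            have hb' : isF j ub.1.val := by
              by_contra h
              exact hEc ⟨b.1, b.2, ub, hub, h⟩
            apply Subtype.ext
            rw [← (ConnectedComponent.mem_supp_iff a.1 ua).mp hua,
                ← (ConnectedComponent.mem_supp_iff b.1 ub).mp hub]
            exact ConnectedComponent.sound (hFreach ua ub ha' hb')
          exact arithA j X.ncard _ _ _ 0 1 (by omega) (by omega)
            (by simpa using hdfbound hEf) hXsplit2
        · -- no small odd components at all
          have hT : Nat.card {c : H.ConnectedComponent //
              Odd (Nat.card c.supp) ∧ Nat.card c.supp ≤ 2*(3*j)-1} ≤ 0 := by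
            have hempty : IsEmpty {c : H.ConnectedComponent //
                Odd (Nat.card c.supp) ∧ Nat.card c.supp ≤ 2*(3*j)-1} := by
              constructor
              rintro ⟨cc, hso⟩
              obtain ⟨u, hu⟩ := hrep cc
              by_cases hf : isF j u.1.val
              · exact hEf ⟨cc, hso, u, hu, hf⟩
              · exact hEc ⟨cc, hso, u, hu, hf⟩
            rw [Nat.card_of_isEmpty]
          exact arithA j X.ncard _ _ _ 0 0 (by omega) (by omega) (by omega) hXsplit2
    · -- CASE C : some centre alive, no blob vertex alive
      have hBX : {w : Fin (6*j+1+fs) | isB j w.val} ⊆ X := by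
        intro w hw
        simp only [Set.mem_setOf_eq] at hw
        by_contra hwx
        exact hB ⟨⟨w, hwx⟩, hw⟩
      -- centre vertices are isolated
      have hiso : ∀ u : ↥Xᶜ, isC j u.1.val → ∀ w, ¬ H.Adj u w := by
        intro u hu w hw
        rcases (Hadj' u w hw).2 with ⟨ha, hb⟩|⟨ha, hb⟩|⟨ha, hb⟩|⟨ha, hb, _⟩
        · unfold isC at hu; unfold isF at ha; omega
        · exact hB ⟨w, hb⟩
        · unfold isC at hu; unfold isB at ha; omega
        · unfold isC at hu; unfold isB at ha; omega
      have hCsupp : ∀ (cc : H.ConnectedComponent) (u : ↥Xᶜ), u ∈ cc.supp → isC j u.1.val →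
          ∀ w ∈ cc.supp, w = u := by
        intro cc u hu huc w hw
        have hr : H.Reachable u w := ConnectedComponent.exact (by
          rw [(ConnectedComponent.mem_supp_iff cc u).mp hu,
              (ConnectedComponent.mem_supp_iff cc w).mp hw])
        exact (isolated_reach (hiso u huc) hr).symm
      -- counting
      have e1 := hsplit {w : Fin (6*j+1+fs) | isC j w.val}
      rw [hCncard] at e1
      have e2 : ({w : Fin (6*j+1+fs) | isB j w.val} ∩ X).ncard = 4*j+2 := by
        rw [Set.inter_eq_self_of_subset_left hBX, hBncard]
      have hacard : Nat.card ↥({w : Fin (6*j+1+fs) | isC j w.val} \ X)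
          = ({w : Fin (6*j+1+fs) | isC j w.val} \ X).ncard := Nat.card_coe_set_eq _
      by_cases hEf : ∃ cc : H.ConnectedComponent, (Odd (Nat.card cc.supp) ∧
          Nat.card cc.supp ≤ 2*(3*j)-1) ∧ ∃ u, u ∈ cc.supp ∧ isF j u.1.val
      · have hT : Nat.card {c : H.ConnectedComponent //
            Odd (Nat.card c.supp) ∧ Nat.card c.supp ≤ 2*(3*j)-1}
            ≤ ({w : Fin (6*j+1+fs) | isC j w.val} \ X).ncard + 1 := by
          have hle := Nat.card_le_card_of_injective
            (f := fun c : {c : H.ConnectedComponent //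
                Odd (Nat.card c.supp) ∧ Nat.card c.supp ≤ 2*(3*j)-1} =>
              if h : ∃ u, u ∈ c.1.supp ∧ isC j u.1.val then
                (Sum.inl ⟨h.choose.1, ⟨h.choose_spec.2, h.choose.2⟩⟩ :
                  ↥({w : Fin (6*j+1+fs) | isC j w.val} \ X) ⊕ (PUnit : Type))
              else Sum.inr PUnit.unit) ?_
          · calc Nat.card {c : H.ConnectedComponent //
                Odd (Nat.card c.supp) ∧ Nat.card c.supp ≤ 2*(3*j)-1}
                ≤ Nat.card (↥({w : Fin (6*j+1+fs) | isC j w.val} \ X) ⊕ (PUnit : Type)) := hle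
              _ = ({w : Fin (6*j+1+fs) | isC j w.val} \ X).ncard + 1 := by
                  rw [Nat.card_sum, hacard]; simp
          · intro a b hab
            by_cases ha : ∃ u, u ∈ a.1.supp ∧ isC j u.1.val
            · by_cases hb2 : ∃ u, u ∈ b.1.supp ∧ isC j u.1.val
              · simp only [dif_pos ha, dif_pos hb2, Sum.inl.injEq, Subtype.mk.injEq] at hab
                have hv : (ha.choose : ↥Xᶜ) = hb2.choose := Subtype.val_injective (Subtype.mk.inj hab)
                apply Subtype.ext
                rw [← (ConnectedComponent.mem_supp_iff a.1 ha.choose).mp ha.choose_spec.1,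
                    ← (ConnectedComponent.mem_supp_iff b.1 hb2.choose).mp hb2.choose_spec.1, hv]
              · simp only [dif_pos ha, dif_neg hb2] at hab
                cases hab
            · by_cases hb2 : ∃ u, u ∈ b.1.supp ∧ isC j u.1.val
              · simp only [dif_neg ha, dif_pos hb2] at hab
                cases hab
              · -- both components consist of filler vertices
                obtain ⟨ua, hua⟩ := hrep a.1
                obtain ⟨ub, hub⟩ := hrep b.1
                have hfa : isF j ua.1.val := by
                  by_cases hf : isF j ua.1.val
                  · exact hf
                  · exfalso
                    by_cases hbb : isB j ua.1.val
                    · exact hB ⟨ua, hbb⟩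
                    · exact ha ⟨ua, hua, by unfold isC; unfold isB at hbb; unfold isF at hf; omega⟩
                have hfb : isF j ub.1.val := by
                  by_cases hf : isF j ub.1.val
                  · exact hf
                  · exfalso
                    by_cases hbb : isB j ub.1.val
                    · exact hB ⟨ub, hbb⟩
                    · exact hb2 ⟨ub, hub, by unfold isC; unfold isB at hbb; unfold isF at hf; omega⟩
                apply Subtype.ext
                rw [← (ConnectedComponent.mem_supp_iff a.1 ua).mp hua,
                    ← (ConnectedComponent.mem_supp_iff b.1 ub).mp hub]
                exact ConnectedComponent.sound (hFreach ua ub hfa hfb)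
        exact arithC j X.ncard _ (({w : Fin (6*j+1+fs) | isC j w.val}) \ X).ncard 1
          (({w : Fin (6*j+1+fs) | isC j w.val}) ∩ X).ncard
          (({w : Fin (6*j+1+fs) | isF j w.val}) ∩ X).ncard hj hT (le_refl 1) (by omega)
          (by simpa using hdfbound hEf) (by omega)
      · have hT : Nat.card {c : H.ConnectedComponent //
            Odd (Nat.card c.supp) ∧ Nat.card c.supp ≤ 2*(3*j)-1}
            ≤ ({w : Fin (6*j+1+fs) | isC j w.val} \ X).ncard + 0 := by
          suffices h2 : Nat.card {c : H.ConnectedComponent //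
              Odd (Nat.card c.supp) ∧ Nat.card c.supp ≤ 2*(3*j)-1}
              ≤ Nat.card ↥({w : Fin (6*j+1+fs) | isC j w.val} \ X) by omega
          have hexC : ∀ c : {c : H.ConnectedComponent //
              Odd (Nat.card c.supp) ∧ Nat.card c.supp ≤ 2*(3*j)-1},
              ∃ u, u ∈ c.1.supp ∧ isC j u.1.val := by
            rintro ⟨cc, hso⟩
            obtain ⟨u, hu⟩ := hrep cc
            refine ⟨u, hu, ?_⟩
            by_cases hf : isF j u.1.val
            · exact absurd ⟨cc, hso, u, hu, hf⟩ hEf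
            · by_cases hbb : isB j u.1.val
              · exact absurd ⟨u, hbb⟩ hB
              · unfold isC; unfold isB at hbb; unfold isF at hf; omega
          apply Nat.card_le_card_of_injective
            (f := fun c => (⟨(hexC c).choose.1, ⟨(hexC c).choose_spec.2, (hexC c).choose.2⟩⟩ :
              ↥({w : Fin (6*j+1+fs) | isC j w.val} \ X)))
          intro a b hab
          simp only [Subtype.mk.injEq] at hab
          have hv : ((hexC a).choose : ↥Xᶜ) = (hexC b).choose := Subtype.val_injective (Subtype.mk.inj hab)
          apply Subtype.ext
          rw [← (ConnectedComponent.mem_supp_iff a.1 (hexC a).choose).mp (hexC a).choose_spec.1,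
              ← (ConnectedComponent.mem_supp_iff b.1 (hexC b).choose).mp (hexC b).choose_spec.1, hv]
        exact arithC j X.ncard _ (({w : Fin (6*j+1+fs) | isC j w.val}) \ X).ncard 0
          (({w : Fin (6*j+1+fs) | isC j w.val}) ∩ X).ncard
          (({w : Fin (6*j+1+fs) | isF j w.val}) ∩ X).ncard hj hT (by omega) (by omega)
          (by omega) (by omega)
  · -- CASE B : no centre alive
    have hCX : {w : Fin (6*j+1+fs) | isC j w.val} ⊆ X := by
      intro w hw
      simp only [Set.mem_setOf_eq] at hw
      by_contra hwx
      exact hC ⟨⟨w, hwx⟩, hw⟩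
    -- two survivors of the same blob lie in one component
    have hsameblob : ∀ u v : ↥Xᶜ, isB j u.1.val → isB j v.1.val →
        bI j u.1.val = bI j v.1.val → H.Reachable u v := by
      intro u v hu hv hbi
      by_cases he : u = v
      · rw [he]
      · exact (HadjI u v (fun hh => he (Subtype.val_injective hh))
          (Or.inr (Or.inr (Or.inr ⟨hu, hv, hbi⟩)))).reachable
    -- components containing a blob vertex stay in that blob
    have hblob : ∀ (cc : H.ConnectedComponent) (u : ↥Xᶜ), u ∈ cc.supp → isB j u.1.val →
        ∀ w ∈ cc.supp, isB j w.1.val ∧ bI j w.1.val = bI j u.1.val := by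
      intro cc u hu hub w hw
      have hr : H.Reachable w u := ConnectedComponent.exact (by
        rw [(ConnectedComponent.mem_supp_iff cc w).mp hw,
            (ConnectedComponent.mem_supp_iff cc u).mp hu])
      have hinv : ∀ a b : ↥Xᶜ, H.Adj a b →
          ((isB j a.1.val ∧ bI j a.1.val = bI j u.1.val) ↔
           (isB j b.1.val ∧ bI j b.1.val = bI j u.1.val)) := by
        intro a b hab
        rcases (Hadj' a b hab).2 with ⟨ha, hb⟩|⟨ha, hb⟩|⟨ha, hb⟩|⟨ha, hb, hbi⟩
        · constructor
          · rintro ⟨h1, -⟩; exact absurd h1 (by unfold isB; unfold isF at ha; omega)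
          · rintro ⟨h1, -⟩; exact absurd h1 (by unfold isB; unfold isF at hb; omega)
        · exact (hC ⟨a, ha⟩).elim
        · exact (hC ⟨b, hb⟩).elim
        · exact ⟨fun ⟨_, h⟩ => ⟨hb, by rw [← hbi]; exact h⟩,
            fun ⟨_, h⟩ => ⟨ha, by rw [hbi]; exact h⟩⟩
      exact (reach_flag (P := fun a : ↥Xᶜ => isB j a.1.val ∧ bI j a.1.val = bI j u.1.val)
        hinv hr).mpr ⟨hub, rfl⟩
    -- a component with odd support in a blob forces a deleted partner vertex
    have hpartner : ∀ (cc : H.ConnectedComponent) (u : ↥Xᶜ), u ∈ cc.supp → isB j u.1.val →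
        Odd (Nat.card cc.supp) →
        ∃ w : Fin (6*j+1+fs), w ∈ X ∧ isB j w.val ∧ bI j w.val = bI j u.1.val := by
      intro cc u hu hub hodd
      have hub' := hub
      unfold isB at hub'
      have hex : ∃ ov : ℕ, ov < 6*j+1+fs ∧ (2*j-1 ≤ ov ∧ ov < 6*j+1) ∧
          (ov - (2*j-1))/2 = (u.1.val - (2*j-1))/2 ∧ ov ≠ u.1.val := by
        by_cases hcase : u.1.val = 2*j-1+2*((u.1.val - (2*j-1))/2)
        · exact ⟨2*j+2*((u.1.val - (2*j-1))/2), by omega, by omega, by omega, by omega⟩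
        · exact ⟨2*j-1+2*((u.1.val - (2*j-1))/2), by omega, by omega, by omega, by omega⟩
      obtain ⟨ov, hov1, hov2, hov3, hov4⟩ := hex
      refine ⟨⟨ov, hov1⟩, ?_, by unfold isB; exact hov2, by unfold bI; exact hov3⟩
      by_contra hwx
      -- the partner is alive, so the support is the whole blob: even cardinality
      set v' : ↥Xᶜ := ⟨⟨ov, hov1⟩, hwx⟩ with hv'
      have hv'B : isB j v'.1.val := by unfold isB; exact hov2
      have hv'bi : bI j v'.1.val = bI j u.1.val := by unfold bI; exact hov3
      have hv'mem : v' ∈ cc.supp := by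
        rw [ConnectedComponent.mem_supp_iff, ← (ConnectedComponent.mem_supp_iff cc u).mp hu]
        exact ConnectedComponent.sound (hsameblob v' u hv'B hub hv'bi)
      have hpairsupp : Subtype.val '' cc.supp = {u.1, v'.1} := by
        ext w
        constructor
        · rintro ⟨y, hy, rfl⟩
          have hy2 := hblob cc u hu hub y hy
          have hy3 := hy2.1
          unfold isB at hy3
          have hy4 := hy2.2
          unfold bI at hy4
          simp only [Set.mem_insert_iff, Set.mem_singleton_iff]
          have hcases : y.1.val = u.1.val ∨ y.1.val = ov := by omega
          rcases hcases with h | h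
          · exact Or.inl (Fin.val_injective h)
          · exact Or.inr (Fin.val_injective h)
        · intro hw
          simp only [Set.mem_insert_iff, Set.mem_singleton_iff] at hw
          rcases hw with rfl | rfl
          · exact ⟨u, hu, rfl⟩
          · exact ⟨v', hv'mem, rfl⟩
      have hcard2 : Nat.card cc.supp = 2 := by
        rw [natCard_subtype_set, hpairsupp, Set.ncard_pair (by
          intro h
          exact hov4 (congrArg Fin.val h).symm)]
      rw [hcard2] at hodd
      exact absurd hodd (by decide)
    -- choose, for each small odd blob component, a dead partner
    have hpick : ∀ c : {c : H.ConnectedComponent // (Odd (Nat.card c.supp) ∧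
        Nat.card c.supp ≤ 2*(3*j)-1) ∧ ∃ u, u ∈ c.supp ∧ isB j u.1.val},
        ∃ p : ↥({w : Fin (6*j+1+fs) | isB j w.val} ∩ X), ∃ u : ↥Xᶜ,
          u ∈ c.1.supp ∧ isB j u.1.val ∧ bI j p.1.val = bI j u.1.val := by
      rintro ⟨cc, hso, u, hu, hub⟩
      obtain ⟨w, hwX, hwB, hwbi⟩ := hpartner cc u hu hub hso.1
      exact ⟨⟨w, ⟨hwB, hwX⟩⟩, u, hu, hub, hwbi⟩
    choose pf pu hpu hpub hpbi using hpick
    have hcompeq : ∀ (a b : {c : H.ConnectedComponent // (Odd (Nat.card c.supp) ∧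
        Nat.card c.supp ≤ 2*(3*j)-1) ∧ ∃ u, u ∈ c.supp ∧ isB j u.1.val}),
        bI j (pu a).1.val = bI j (pu b).1.val → a = b := by
      intro a b hbi
      have hr := hsameblob (pu a) (pu b) (hpub a) (hpub b) hbi
      apply Subtype.ext
      rw [← (ConnectedComponent.mem_supp_iff a.1 (pu a)).mp (hpu a),
          ← (ConnectedComponent.mem_supp_iff b.1 (pu b)).mp (hpu b)]
      exact ConnectedComponent.sound hr
    have hQ2 : Nat.card {c : H.ConnectedComponent // (Odd (Nat.card c.supp) ∧
        Nat.card c.supp ≤ 2*(3*j)-1) ∧ ∃ u, u ∈ c.supp ∧ isB j u.1.val} ≤ 2*j+1 := by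
      have hle := Nat.card_le_card_of_injective
        (f := fun c => (⟨bI j (pu c).1.val, by
          have hc := hpub c; unfold isB at hc; unfold bI; omega⟩ : Fin (2*j+1))) ?_
      · simpa using hle
      · intro a b hab
        exact hcompeq a b (by simpa using congrArg Fin.val hab)
    have hQ1 : Nat.card {c : H.ConnectedComponent // (Odd (Nat.card c.supp) ∧
        Nat.card c.supp ≤ 2*(3*j)-1) ∧ ∃ u, u ∈ c.supp ∧ isB j u.1.val}
        ≤ ({w : Fin (6*j+1+fs) | isB j w.val} ∩ X).ncard := by
      rw [← Nat.card_coe_set_eq]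
      apply Nat.card_le_card_of_injective pf
      intro a b hab
      apply hcompeq a b
      have hbia := hpbi a
      have hbib := hpbi b
      rw [hab] at hbia
      -- facts about the common partner
      have hmem := (pf b).2
      simp only [Set.mem_inter_iff, Set.mem_setOf_eq] at hmem
      obtain ⟨hPB, hPX⟩ := hmem
      have hnea : (pu a).1.val ≠ (pf b).1.val := by
        intro h
        have h2 : (pu a).1 = (pf b).1 := Fin.val_injective h
        have hm := (pu a).2
        rw [h2] at hm
        exact hm hPX
      have hneb : (pu b).1.val ≠ (pf b).1.val := by
        intro h
        have h2 : (pu b).1 = (pf b).1 := Fin.val_injective h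
        have hm := (pu b).2
        rw [h2] at hm
        exact hm hPX
      have hBa := hpub a
      have hBb := hpub b
      unfold isB at hBa hBb hPB
      unfold bI at hbia hbib ⊢
      omega
    -- putting the counts together
    have e1 : ({w : Fin (6*j+1+fs) | isC j w.val} ∩ X).ncard = 2*j-1 := by
      rw [Set.inter_eq_self_of_subset_left hCX, hCncard]
    by_cases hEf : ∃ cc : H.ConnectedComponent, (Odd (Nat.card cc.supp) ∧
        Nat.card cc.supp ≤ 2*(3*j)-1) ∧ ∃ u, u ∈ cc.supp ∧ isF j u.1.val
    · have hT : Nat.card {c : H.ConnectedComponent //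
          Odd (Nat.card c.supp) ∧ Nat.card c.supp ≤ 2*(3*j)-1}
          ≤ Nat.card {c : H.ConnectedComponent // (Odd (Nat.card c.supp) ∧
            Nat.card c.supp ≤ 2*(3*j)-1) ∧ ∃ u, u ∈ c.supp ∧ isB j u.1.val} + 1 := by
        have hle := Nat.card_le_card_of_injective
          (f := fun c : {c : H.ConnectedComponent //
              Odd (Nat.card c.supp) ∧ Nat.card c.supp ≤ 2*(3*j)-1} =>
            if h : ∃ u, u ∈ c.1.supp ∧ isB j u.1.val then
              (Sum.inl ⟨c.1, c.2, h⟩ : {c : H.ConnectedComponent // (Odd (Nat.card c.supp) ∧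
                Nat.card c.supp ≤ 2*(3*j)-1) ∧ ∃ u, u ∈ c.supp ∧ isB j u.1.val} ⊕ (PUnit : Type))
            else Sum.inr PUnit.unit) ?_
        · calc Nat.card {c : H.ConnectedComponent //
              Odd (Nat.card c.supp) ∧ Nat.card c.supp ≤ 2*(3*j)-1} ≤ _ := hle
            _ = _ + 1 := by rw [Nat.card_sum]; simp
        · intro a b hab
          by_cases ha : ∃ u, u ∈ a.1.supp ∧ isB j u.1.val
          · by_cases hb2 : ∃ u, u ∈ b.1.supp ∧ isB j u.1.val
            · simp only [dif_pos ha, dif_pos hb2, Sum.inl.injEq, Subtype.mk.injEq] at hab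
              exact Subtype.ext hab
            · simp only [dif_pos ha, dif_neg hb2] at hab
              cases hab
          · by_cases hb2 : ∃ u, u ∈ b.1.supp ∧ isB j u.1.val
            · simp only [dif_neg ha, dif_pos hb2] at hab
              cases hab
            · obtain ⟨ua, hua⟩ := hrep a.1
              obtain ⟨ub, hub⟩ := hrep b.1
              have hfa : isF j ua.1.val := by
                by_contra hf
                by_cases hcc : isC j ua.1.val
                · exact hC ⟨ua, hcc⟩
                · exact ha ⟨ua, hua, by unfold isB; unfold isC at hcc; unfold isF at hf; omega⟩
              have hfb : isF j ub.1.val := by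
                by_contra hf
                by_cases hcc : isC j ub.1.val
                · exact hC ⟨ub, hcc⟩
                · exact hb2 ⟨ub, hub, by unfold isB; unfold isC at hcc; unfold isF at hf; omega⟩
              apply Subtype.ext
              rw [← (ConnectedComponent.mem_supp_iff a.1 ua).mp hua,
                  ← (ConnectedComponent.mem_supp_iff b.1 ub).mp hub]
              exact ConnectedComponent.sound (hFreach ua ub hfa hfb)
      exact arithB j X.ncard _ _ 1 (({w : Fin (6*j+1+fs) | isB j w.val} ∩ X).ncard)
        (({w : Fin (6*j+1+fs) | isF j w.val} ∩ X).ncard) hj hT (le_refl 1) hQ2 hQ1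
        (by simpa using hdfbound hEf) (by omega)
    · have hT : Nat.card {c : H.ConnectedComponent //
          Odd (Nat.card c.supp) ∧ Nat.card c.supp ≤ 2*(3*j)-1}
          ≤ Nat.card {c : H.ConnectedComponent // (Odd (Nat.card c.supp) ∧
            Nat.card c.supp ≤ 2*(3*j)-1) ∧ ∃ u, u ∈ c.supp ∧ isB j u.1.val} + 0 := by
        suffices h2 : Nat.card {c : H.ConnectedComponent //
            Odd (Nat.card c.supp) ∧ Nat.card c.supp ≤ 2*(3*j)-1}
            ≤ Nat.card {c : H.ConnectedComponent // (Odd (Nat.card c.supp) ∧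
              Nat.card c.supp ≤ 2*(3*j)-1) ∧ ∃ u, u ∈ c.supp ∧ isB j u.1.val} by omega
        have hexB : ∀ c : {c : H.ConnectedComponent //
            Odd (Nat.card c.supp) ∧ Nat.card c.supp ≤ 2*(3*j)-1},
            ∃ u, u ∈ c.1.supp ∧ isB j u.1.val := by
          rintro ⟨cc, hso⟩
          obtain ⟨u, hu⟩ := hrep cc
          refine ⟨u, hu, ?_⟩
          by_cases hf : isF j u.1.val
          · exact absurd ⟨cc, hso, u, hu, hf⟩ hEf
          · by_cases hcc : isC j u.1.val
            · exact absurd ⟨u, hcc⟩ hC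
            · unfold isB; unfold isC at hcc; unfold isF at hf; omega
        apply Nat.card_le_card_of_injective
          (f := fun c => (⟨c.1, c.2, hexB c⟩ : {c : H.ConnectedComponent //
            (Odd (Nat.card c.supp) ∧ Nat.card c.supp ≤ 2*(3*j)-1) ∧
            ∃ u, u ∈ c.supp ∧ isB j u.1.val}))
        intro a b hab
        simp only [Subtype.mk.injEq] at hab
        exact Subtype.ext hab
      exact arithB j X.ncard _ _ 0 (({w : Fin (6*j+1+fs) | isB j w.val} ∩ X).ncard)
        (({w : Fin (6*j+1+fs) | isF j w.val} ∩ X).ncard) hj hT (by omega) hQ2 hQ1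
        (by omega) (by omega)
end S18

/-- for every `k ≥ 3` divisible by `3` there are infinitely many graphs
without a `{P₂, P_{2k+1}}`-factor satisfying the odd-component counting inequality. -/
theorem stmt18 (k : ℕ) (hk3 : 3 ≤ k) (hkmod : k % 3 = 0) :
    ∀ N : ℕ, ∃ m, N ≤ m ∧ ∃ G : SimpleGraph (Fin m),
      ¬ HasPathFamilyFactor G {2, 2 * k + 1} ∧
      ∀ X : Set (Fin m),
        (∑ i ∈ Finset.range k, (cCount (SimpleGraph.induce Xᶜ G) (2 * i + 1) : ℚ)) ≤
          ((4 * k + 6) / (8 * k + 3)) * X.ncard + (2 * k + 3) / (8 * k + 3) := by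
  intro N
  obtain ⟨j, hj1, rfl⟩ : ∃ j, 1 ≤ j ∧ k = 3*j := ⟨k/3, by omega, by omega⟩
  refine ⟨6*j+1+2*(max (3*j+1) N), ?_, S18.gg j (2*(max (3*j+1) N)), ?_, ?_⟩
  · have := le_max_right (3*j+1) N
    omega
  · exact S18.no_factor j (2*(max (3*j+1) N)) hj1
  · intro X
    have hineq := S18.ineq j (2*(max (3*j+1) N)) hj1
      (by have := le_max_left (3*j+1) N; omega) X
    have h83 : (0:ℚ) < 8*(3*j : ℕ)+3 := by positivity
    rw [div_mul_eq_mul_div, ← add_div, le_div_iff₀ h83]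
    have hsumc : (∑ i ∈ Finset.range (3*j),
          (cCount (SimpleGraph.induce Xᶜ (S18.gg j (2*(max (3*j+1) N)))) (2*i+1) : ℚ))
        = ((∑ i ∈ Finset.range (3*j),
          cCount (SimpleGraph.induce Xᶜ (S18.gg j (2*(max (3*j+1) N)))) (2*i+1) : ℕ) : ℚ) := by
      push_cast
      ring
    rw [hsumc]
    have hc : (((24*j+3) * (∑ i ∈ Finset.range (3*j),
          cCount (SimpleGraph.induce Xᶜ (S18.gg j (2*(max (3*j+1) N)))) (2*i+1)) : ℕ) : ℚ)
        ≤ (((12*j+6) * X.ncard + (6*j+3) : ℕ) : ℚ) := by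
      exact_mod_cast hineq
    push_cast at hc ⊢
    nlinarith [hc]
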